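/- With 𝒱, Φ, Υ as above: for any indexing set J and Φ-closed sets I and K_j (j ∈ J), we have I ∩ Υ(⋃_J K_j) ⊆ Φ(⋃_J (I ∩ K_j)). -/

import Mathlib

universe u

variable {P : Type u} [PartialOrder P]

/-- The downward closure of a set in a poset. -/
def dcl (S : Set P) : Set P := {q | ∃ s ∈ S, q ≤ s}

/-- A join-specification: a collection of nonempty subsets each having a join,
containing all singletons. -/
def IsJoinSpec (U : Set (Set P)) : Prop :=
  (∀ S ∈ U, ∃ j, IsLUB S j) ∧ (∀ p : P, {p} ∈ U) ∧ ∅ ∉ U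

/-- A `U`-ideal: a down-set closed under joins of members of `U` contained in it. -/
def IsUIdeal (U : Set (Set P)) (I : Set P) : Prop :=
  IsLowerSet I ∧ ∀ S ∈ U, S ⊆ I → ∀ j, IsLUB S j → j ∈ I

/-- The smallest `U`-ideal containing `S`. -/
def GammaU (U : Set (Set P)) (S : Set P) : Set P :=
  ⋂₀ {I | IsUIdeal U I ∧ S ⊆ I}

/-- A standard closure operator on the powerset of a poset. -/
def IsStdClosure (Γ : Set P → Set P) : Prop :=
  (∀ S, S ⊆ Γ S) ∧ (∀ S T, S ⊆ T → Γ S ⊆ Γ T) ∧ (∀ S, Γ (Γ S) = Γ S) ∧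
  (∀ p : P, Γ {p} = {q | q ≤ p})

/-- The join-specification induced by a standard closure operator. -/
def UGamma (Γ : Set P → Set P) : Set (Set P) :=
  {S | (∃ j, IsLUB S j) ∧ ∀ C, Γ C = C → S ⊆ C → ∀ j, IsLUB S j → j ∈ C}

/-- The radius of a join-specification: the smallest cardinal exceeding the
cardinality of each of its members. -/
noncomputable def radius (U : Set (Set P)) : Cardinal :=
  ⨆ S : U, Order.succ (Cardinal.mk S.1)

/-- The ordinal of the smallest regular cardinal at least the radius of `U`. -/
noncomputable def chiOrd (U : Set (Set P)) : Ordinal :=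
  (sInf {c : Cardinal | c.IsRegular ∧ radius U ≤ c}).ord

/-- The transfinite iteration building the smallest `U`-ideal (with downward
closure at successor steps). -/
noncomputable def gammaIter (U : Set (Set P)) (S : Set P) (o : Ordinal) : Set P :=
  Ordinal.limitRecOn o (dcl S)
    (fun _ ih => dcl {p | ∃ T ∈ U, T ⊆ ih ∧ IsLUB T p})
    (fun o _ ih => ⋃ (b : Ordinal) (h : b < o), ih b h)

/-- The transfinite iteration without downward closure at successor steps. -/
noncomputable def upsIter (U : Set (Set P)) (S : Set P) (o : Ordinal) : Set P :=
  Ordinal.limitRecOn o (dcl S)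
    (fun _ ih => {p | ∃ T ∈ U, T ⊆ ih ∧ IsLUB T p})
    (fun o _ ih => ⋃ (b : Ordinal) (h : b < o), ih b h)

/-- The operator `Υ` built from `𝒰_Φ` where `Φ = Γ_𝒱`. -/
noncomputable def Upsilon (V : Set (Set P)) (S : Set P) : Set P :=
  upsIter (UGamma (GammaU V)) S (chiOrd (UGamma (GammaU V)))

lemma isUIdeal_univ (U : Set (Set P)) : IsUIdeal U (Set.univ : Set P) :=
  ⟨fun _ _ _ _ => trivial, fun _ _ _ _ _ => trivial⟩

lemma isUIdeal_gammaU (U : Set (Set P)) (S : Set P) : IsUIdeal U (GammaU U S) := by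
  constructor
  · intro a b hba ha C hC
    exact hC.1.1 hba (ha C hC)
  · intro T hT hTsub j hj C hC
    exact hC.1.2 T hT (fun t ht => hTsub ht C hC) j hj

lemma subset_gammaU (U : Set (Set P)) (S : Set P) : S ⊆ GammaU U S :=
  fun s hs C hC => hC.2 hs

lemma gammaU_subset (U : Set (Set P)) {S C : Set P} (hC : IsUIdeal U C) (hSC : S ⊆ C) :
    GammaU U S ⊆ C := Set.sInter_subset_of_mem ⟨hC, hSC⟩

lemma gammaU_idem (U : Set (Set P)) (S : Set P) : GammaU U (GammaU U S) = GammaU U S :=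
  le_antisymm (gammaU_subset U (isUIdeal_gammaU U S) le_rfl)
    (subset_gammaU U _)

lemma isUIdeal_of_fixed (U : Set (Set P)) {I : Set P} (hI : GammaU U I = I) :
    IsUIdeal U I := hI ▸ isUIdeal_gammaU U I

theorem inter_upsilon_subset
    (V : Set (Set P)) (hV : IsJoinSpec V)
    (I : Set P) (hI : GammaU V I = I)
    (𝒦 : Set (Set P)) (h𝒦 : ∀ K ∈ 𝒦, GammaU V K = K) :
    I ∩ Upsilon V (⋃₀ 𝒦) ⊆ GammaU V (⋃ K ∈ 𝒦, I ∩ K) := by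
  set D : Set P := ⋃ K ∈ 𝒦, I ∩ K with hD
  have hIideal : IsUIdeal V I := isUIdeal_of_fixed V hI
  have key : ∀ o : Ordinal, I ∩ upsIter (UGamma (GammaU V)) (⋃₀ 𝒦) o ⊆ GammaU V D := by
    intro o
    induction o using Ordinal.limitRecOn with
    | zero =>
      rintro p ⟨hpI, hp⟩
      rw [upsIter, Ordinal.limitRecOn_zero] at hp
      obtain ⟨s, hs, hps⟩ := hp
      obtain ⟨K, hK, hsK⟩ := hs
      have hKideal : IsUIdeal V K := isUIdeal_of_fixed V (h𝒦 K hK)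
      have hpK : p ∈ K := hKideal.1 hps hsK
      exact subset_gammaU V D (Set.mem_biUnion hK ⟨hpI, hpK⟩)
    | add_one o ih =>
      rintro p ⟨hpI, hp⟩
      rw [upsIter, Ordinal.limitRecOn_add_one] at hp
      obtain ⟨T, hTU, hTsub, hTp⟩ := hp
      have hTsub' : T ⊆ GammaU V D := fun t ht =>
        ih ⟨hIideal.1 (hTp.1 ht) hpI, hTsub ht⟩
      exact hTU.2 (GammaU V D) (gammaU_idem V D) hTsub' p hTp
    | limit o ho ih =>
      rintro p ⟨hpI, hp⟩
      rw [upsIter, Ordinal.limitRecOn_limit _ _ _ _ ho] at hp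
      obtain ⟨_, ⟨b, rfl⟩, _, ⟨hb, rfl⟩, hpb⟩ := hp
      exact ih b hb ⟨hpI, hpb⟩
  exact key _
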